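/- Adopt the directional pattern setup. If G_SL < (⌊L/2⌋/⌈L/2⌉) · inf_{φ ∈ [0, 2π/L)} (1/L)·Σ_{l=0}^{L−1} G_l(φ), then Condition (C) holds, i.e., G_SL < (⌊L/2⌋/⌈L/2⌉) · inf_{φ ∈ [φ_B − 2π/L, (L−1)·2π/L − φ_B]} (1/(L−1))·Σ_{l=0}^{L−2} G_l(φ). -/

import Mathlib

/-- Corollary 1: the simpler sufficient condition
`G_SL < (⌊L/2⌋/⌈L/2⌉)·inf_{φ ∈ [0,2π/L)} (1/L)·Σ_{l<L} G_l(φ)` implies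
Condition (C). -/
theorem stmt5
(L : ℕ) (hL : 2 ≤ L)
    (G : ℝ → ℝ) (hGnn : ∀ φ, 0 ≤ G φ)
    (hGper : ∀ φ, G (φ + 2 * Real.pi) = G φ)
    (GSL φB : ℝ) (hGSL : 0 ≤ GSL)
    (hφB0 : 0 < φB) (hφBhalf : φB < Real.pi / 2)
    (hmain : ∀ φ ∈ Set.Ioo (-φB) φB, GSL < G φ)
    (hside : ∀ φ : ℝ, φB ≤ |φ| → |φ| ≤ Real.pi → G φ ≤ GSL)
    (Gl : ℕ → ℝ → ℝ)
    (hGl : ∀ l φ, Gl l φ = G (φ - l * (2 * Real.pi) / L))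
    (hcc : GSL < ((L / 2 : ℕ) : ℝ) / (((L + 1) / 2 : ℕ) : ℝ) *
      sInf ((fun φ => (1 / (L : ℝ)) * ∑ l ∈ Finset.range L, Gl l φ) ''
        Set.Ico (0:ℝ) (2 * Real.pi / L))) :
    GSL < ((L / 2 : ℕ) : ℝ) / (((L + 1) / 2 : ℕ) : ℝ) *
      sInf ((fun φ => (1 / ((L : ℝ) - 1)) * ∑ l ∈ Finset.range (L - 1), Gl l φ) ''
        Set.Icc (φB - 2 * Real.pi / L) (((L : ℝ) - 1) * (2 * Real.pi) / L - φB)) := by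
  obtain ⟨K, rfl⟩ : ∃ K, L = K + 1 := ⟨L - 1, by omega⟩
  have hK1 : 1 ≤ K := by omega
  set L := K + 1 with hLdef
  have hLR : (2:ℝ) ≤ (L:ℝ) := by exact_mod_cast hL
  have hL0 : (0:ℝ) < (L:ℝ) := by linarith
  have hpi : (0:ℝ) < Real.pi := Real.pi_pos
  set p : ℝ := 2 * Real.pi / L with hpdef
  have hp0 : 0 < p := by positivity
  have hLp : (L:ℝ) * p = 2 * Real.pi := by
    rw [hpdef]; field_simp
  -- the full sum as a function
  set f : ℝ → ℝ := fun φ => ∑ l ∈ Finset.range L, G (φ - l * p) with hfdef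
  have hGlf : ∀ φ, ∑ l ∈ Finset.range L, Gl l φ = f φ := by
    intro φ
    refine Finset.sum_congr rfl fun l _ => ?_
    rw [hGl]
    congr 1
    rw [hpdef]; ring
  have hfnn : ∀ φ, 0 ≤ f φ :=
    fun φ => Finset.sum_nonneg fun l _ => hGnn _
  -- periodicity of f with period p
  have hfper : Function.Periodic f p := by
    intro φ
    have h1 : f (φ + p) = (∑ i ∈ Finset.range K, G (φ - i * p)) + G (φ + p) := by
      rw [hfdef]
      simp only
      rw [Finset.sum_range_succ']
      congr 1
      · refine Finset.sum_congr rfl fun i _ => ?_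
        congr 1
        push_cast
        ring
      · simp
    have h2 : f φ = (∑ i ∈ Finset.range K, G (φ - i * p)) + G (φ - K * p) := by
      rw [hfdef]; simp only [hLdef, Finset.sum_range_succ]
    have h3 : G (φ + p) = G (φ - K * p) := by
      have : φ + p = (φ - K * p) + 2 * Real.pi := by
        have : ((K:ℝ) + 1) * p = 2 * Real.pi := by exact_mod_cast hLp
        nlinarith [this]
      rw [this, hGper]
    rw [h1, h2, h3]
  -- f is invariant under adding integer multiples of p
  have hfzl : ∀ (n : ℤ) (ψ : ℝ), f (ψ + n • p) = f ψ := by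
    intro n ψ
    have := (hfper.int_mul n) ψ
    simpa [mul_comm, zsmul_eq_mul] using this
  -- the infimum set S₁
  set S₁ : Set ℝ := (fun φ => (1 / (L : ℝ)) * ∑ l ∈ Finset.range L, Gl l φ) ''
      Set.Ico (0:ℝ) (2 * Real.pi / L) with hS₁
  have hS₁bdd : BddBelow S₁ := by
    refine ⟨0, fun x hx => ?_⟩
    obtain ⟨φ, _, rfl⟩ := hx
    simp only
    rw [hGlf]
    exact mul_nonneg (by positivity) (hfnn φ)
  set m : ℝ := sInf S₁ with hm
  -- every value of the full average dominates m
  have hm_le : ∀ φ, (L:ℝ) * m ≤ f φ := by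
    intro φ
    have hmem : toIcoMod hp0 0 φ ∈ Set.Ico (0:ℝ) (2 * Real.pi / L) := by
      have := toIcoMod_mem_Ico hp0 0 φ
      simpa [hpdef] using this
    have hfeq : f (toIcoMod hp0 0 φ) = f φ := by
      conv_rhs => rw [← toIcoMod_add_toIcoDiv_zsmul hp0 0 φ]
      rw [hfzl]
    have hin : (1 / (L : ℝ)) * f φ ∈ S₁ := by
      refine ⟨toIcoMod hp0 0 φ, hmem, ?_⟩
      simp only
      rw [hGlf, hfeq]
    have := csInf_le hS₁bdd hin
    rw [← hm] at this
    calc (L:ℝ) * m ≤ (L:ℝ) * ((1 / (L:ℝ)) * f φ) :=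
          mul_le_mul_of_nonneg_left this (le_of_lt hL0)
      _ = f φ := by field_simp
  -- ratio r
  set r : ℝ := ((L / 2 : ℕ) : ℝ) / (((L + 1) / 2 : ℕ) : ℝ) with hr
  have hn1 : 1 ≤ L / 2 := by omega
  have hn2 : L / 2 ≤ (L + 1) / 2 := by omega
  have hn2pos : 0 < (L + 1) / 2 := by omega
  have hr0 : 0 < r := by
    rw [hr]
    have h1 : (0:ℝ) < ((L / 2 : ℕ) : ℝ) := by exact_mod_cast hn1
    have h2 : (0:ℝ) < (((L + 1) / 2 : ℕ) : ℝ) := by exact_mod_cast hn2pos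
    positivity
  have hr1 : r ≤ 1 := by
    rw [hr, div_le_one (by exact_mod_cast hn2pos)]
    exact_mod_cast hn2
  have hccm : GSL < r * m := hcc
  have hmpos : 0 < m := by
    by_contra h
    push_neg at h
    nlinarith
  -- lower bound b
  set b : ℝ := ((L:ℝ) * m - GSL) / ((L:ℝ) - 1) with hb
  -- final set S₂
  have heq : ((L:ℝ) - 1) * (2 * Real.pi) / L + 2 * Real.pi / L = 2 * Real.pi := by
    field_simp
    ring
  have hIccne : (Set.Icc (φB - p) (((L : ℝ) - 1) * (2 * Real.pi) / L - φB)).Nonempty := by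
    rw [Set.nonempty_Icc, hpdef]
    linarith
  -- key pointwise bound on the interval
  have key : ∀ φ ∈ Set.Icc (φB - p) (((L : ℝ) - 1) * (2 * Real.pi) / L - φB),
      b ≤ (1 / ((L : ℝ) - 1)) * ∑ l ∈ Finset.range (L - 1), Gl l φ := by
    intro φ hφ
    obtain ⟨hφ1, hφ2⟩ := hφ
    -- the missing term is small
    set ψ : ℝ := φ - K * p with hψ
    have hψub : ψ ≤ -φB := by
      have hc : ((L : ℝ) - 1) * (2 * Real.pi) / L = K * p := by
        rw [hpdef]; push_cast [hLdef]; ring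
      rw [hc] at hφ2
      rw [hψ]; linarith
    have hψlb : φB - 2 * Real.pi ≤ ψ := by
      have hKp : (K:ℝ) * p = 2 * Real.pi - p := by
        have : ((K:ℝ) + 1) * p = 2 * Real.pi := by exact_mod_cast hLp
        linarith
      rw [hψ, hKp]
      rw [hpdef] at hφ1 ⊢
      linarith
    have hGψ : G ψ ≤ GSL := by
      by_cases hcase : -Real.pi ≤ ψ
      · refine hside ψ ?_ ?_
        · rw [abs_of_nonpos (by linarith)]; linarith
        · rw [abs_of_nonpos (by linarith)]; linarith
      · push_neg at hcase
        have h2π : G (ψ + 2 * Real.pi) = G ψ := hGper ψ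
        rw [← h2π]
        refine hside _ ?_ ?_
        · rw [abs_of_nonneg (by linarith)]; linarith
        · rw [abs_of_nonneg (by linarith)]; linarith
    -- sum identity
    have hsum : ∑ l ∈ Finset.range (L - 1), Gl l φ = f φ - G ψ := by
      have hL1 : L - 1 = K := by omega
      have : f φ = (∑ l ∈ Finset.range K, G (φ - l * p)) + G ψ := by
        rw [hfdef, hψ]; simp only [hLdef, Finset.sum_range_succ]
      rw [hL1, this]
      have : ∑ l ∈ Finset.range K, Gl l φ = ∑ l ∈ Finset.range K, G (φ - l * p) := by
        refine Finset.sum_congr rfl fun l _ => ?_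
        rw [hGl]
        congr 1
        rw [hpdef]; ring
      rw [this]; ring
    have hflb : (L:ℝ) * m ≤ f φ := hm_le φ
    have hL1R : (0:ℝ) < (L:ℝ) - 1 := by linarith
    rw [hsum, hb, one_div, inv_mul_eq_div]
    exact div_le_div_of_nonneg_right (by linarith) hL1R.le
  -- conclude
  have hS₂ : b ≤ sInf ((fun φ => (1 / ((L : ℝ) - 1)) * ∑ l ∈ Finset.range (L - 1), Gl l φ) ''
      Set.Icc (φB - p) (((L : ℝ) - 1) * (2 * Real.pi) / L - φB)) := by
    refine le_csInf (hIccne.image _) ?_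
    rintro x ⟨φ, hφ, rfl⟩
    exact key φ hφ
  have hfin : GSL < r * b := by
    have hL1R : (0:ℝ) < (L:ℝ) - 1 := by linarith
    rw [hb, ← mul_div_assoc, lt_div_iff₀ hL1R]
    have h1 : (L:ℝ) * GSL < (L:ℝ) * (r * m) := mul_lt_mul_of_pos_left hccm hL0
    have h2 : r * GSL ≤ 1 * GSL := mul_le_mul_of_nonneg_right hr1 hGSL
    nlinarith
  calc GSL < r * b := hfin
    _ ≤ r * _ := mul_le_mul_of_nonneg_left hS₂ (le_of_lt hr0)
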